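/- arXiv:1901.06900 — 3 statements merged into one kernel-verified Lean document; each statement's English description precedes it below -/
import Mathlib

section
/- Let K be a family of pairwise disjoint intervals in the full binary tree, all of the same length n. Then almost surely (with respect to the coin-tossing measure on branches), if a branch visits sources of K infinitely often, then it visits targets of K infinitely often. -/
open MeasureTheory ENNReal

/-- The cylinder of branches extending the finite word `x`. -/
def cylinder (x : List Bool) : Set (ℕ → Bool) :=
  {π | ∀ i : Fin x.length, π i = x.get i}

/-- A branch visits the set of nodes `S` infinitely often. -/
def visitsIO (S : Set (List Bool)) (π : ℕ → Bool) : Prop :=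
  {z ∈ S | π ∈ cylinder z}.Infinite

/-- The set of nodes of the interval `[p.1, p.2]`. -/
def intervalSet (p : List Bool × List Bool) : Set (List Bool) :=
  {z | p.1 <+: z ∧ z <+: p.2}

/-- The length of an interval: the number of nodes strictly between source and target. -/
def intervalLen (p : List Bool × List Bool) : ℕ :=
  p.2.length - p.1.length - 1

/-- A family of pairwise disjoint intervals in the full binary tree. -/
def IsIntervalFamily (I : Set (List Bool × List Bool)) : Prop :=
  (∀ p ∈ I, p.1 <+: p.2 ∧ p.1 ≠ p.2) ∧
  (∀ p ∈ I, ∀ q ∈ I, p ≠ q → intervalSet p ∩ intervalSet q = ∅)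

/-- An interval of the family is a record breaker if it is strictly longer than all
intervals of the family whose sources are strict ancestors of its source. -/
def RecordBreaker (I : Set (List Bool × List Bool)) (p : List Bool × List Bool) : Prop :=
  p ∈ I ∧ ∀ q ∈ I, (q.1 <+: p.1 ∧ q.1 ≠ p.1) → intervalLen q < intervalLen p

lemma cylinder_mono {x z : List Bool} (h : x <+: z) : cylinder z ⊆ cylinder x := by
  intro π hπ i
  have hi : (i : ℕ) < z.length := lt_of_lt_of_le i.isLt h.length_le
  have h1 := hπ ⟨i, hi⟩
  simp only [List.get_eq_getElem] at h1 ⊢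
  rw [h1]
  exact (List.IsPrefix.getElem h i.isLt).symm

lemma prefix_of_mem_cylinder {x z : List Bool} {π : ℕ → Bool}
    (hx : π ∈ cylinder x) (hz : π ∈ cylinder z) (h : x.length ≤ z.length) : x <+: z := by
  have hx' : x = z.take x.length := by
    apply List.ext_getElem
    · simp [List.length_take, h]
    · intro i h1 h2
      have e1 := hx ⟨i, h1⟩
      have e2 := hz ⟨i, lt_of_lt_of_le h1 h⟩
      simp only [List.get_eq_getElem] at e1 e2
      rw [List.getElem_take, ← e2, ← e1]
  rw [hx']
  exact List.take_prefix _ _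

lemma cylinder_disj {x z : List Bool} (hxz : ¬ x <+: z) (hzx : ¬ z <+: x) :
    Disjoint (cylinder x) (cylinder z) := by
  rw [Set.disjoint_left]
  intro π hx hz
  rcases le_total x.length z.length with h | h
  · exact hxz (prefix_of_mem_cylinder hx hz h)
  · exact hzx (prefix_of_mem_cylinder hz hx h)

lemma measurableSet_cylinder (x : List Bool) : MeasurableSet (cylinder x) := by
  have : _root_.cylinder x = ⋂ i : Fin x.length, (fun π : ℕ → Bool => π i) ⁻¹' {x.get i} := by
    ext π; simp [_root_.cylinder, Set.mem_iInter, Set.mem_preimage]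
  rw [this]
  exact MeasurableSet.iInter fun i =>
    (measurable_pi_apply (i : ℕ)) (measurableSet_singleton _)

lemma mem_cylinder_ofFn (π : ℕ → Bool) (m : ℕ) :
    π ∈ cylinder (List.ofFn fun i : Fin m => π i) := by
  intro i
  have hi : (i : ℕ) < m := by simpa using i.isLt
  simp [List.get_ofFn]

lemma exists_min_length_mem {s : Set (List Bool × List Bool)} (hs : s.Nonempty) :
    ∃ p ∈ s, ∀ q ∈ s, p.1.length ≤ q.1.length := by
  have h1 : ((fun q : List Bool × List Bool => q.1.length) '' s).Nonempty := hs.image _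
  obtain ⟨p, hp, hpl⟩ := Nat.sInf_mem h1
  refine ⟨p, hp, fun q hq => ?_⟩
  simp only at hpl
  rw [hpl]
  exact Nat.sInf_le ⟨q, hq, rfl⟩

/-- The event: at least `k` sources of `K` extending `w` lie on `π`, and the target of
every source of `K` extending `w` lying on `π` is missed by `π`. -/
def Evt (K : Set (List Bool × List Bool)) (k : ℕ) (w : List Bool) : Set (ℕ → Bool) :=
  {π | π ∈ cylinder w ∧
    (∃ S : Finset (List Bool × List Bool), S.card = k ∧
      ∀ p ∈ S, p ∈ K ∧ w <+: p.1 ∧ π ∈ cylinder p.1) ∧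
    ∀ p ∈ K, w <+: p.1 → π ∈ cylinder p.1 → π ∉ cylinder p.2}

section Family

variable {K : Set (List Bool × List Bool)} (hK : IsIntervalFamily K) {n : ℕ}
  (hlen : ∀ p ∈ K, intervalLen p = n)

include hK

lemma src_inj {p q : List Bool × List Bool} (hp : p ∈ K) (hq : q ∈ K)
    (h : p.1 = q.1) : p = q := by
  by_contra hne
  have h1 : p.1 ∈ intervalSet p := ⟨List.prefix_refl _, (hK.1 p hp).1⟩
  have h2 : p.1 ∈ intervalSet q := ⟨h ▸ List.prefix_refl _, h ▸ (hK.1 q hq).1⟩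
  have := hK.2 p hp q hq hne
  exact absurd (Set.mem_inter h1 h2) (by rw [this]; exact Set.notMem_empty _)

lemma eq_of_src_between {p q : List Bool × List Bool} (hp : p ∈ K) (hq : q ∈ K)
    (h1 : p.1 <+: q.1) (h2 : q.1 <+: p.2) : p = q := by
  by_contra hne
  have m1 : q.1 ∈ intervalSet p := ⟨h1, h2⟩
  have m2 : q.1 ∈ intervalSet q := ⟨List.prefix_refl _, (hK.1 q hq).1⟩
  have := hK.2 p hp q hq hne
  exact absurd (Set.mem_inter m1 m2) (by rw [this]; exact Set.notMem_empty _)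

include hlen

lemma target_len {p : List Bool × List Bool} (hp : p ∈ K) :
    p.2.length = p.1.length + n + 1 := by
  have h1 := (hK.1 p hp).1.length_le
  have h2 : p.1.length ≠ p.2.length := by
    intro h
    exact (hK.1 p hp).2 ((hK.1 p hp).1.eq_of_length_le h.ge)
  have := hlen p hp
  unfold intervalLen at this
  omega

variable (μ : Measure (ℕ → Bool)) [IsProbabilityMeasure μ]
  (hμ : ∀ x : List Bool, μ (cylinder x) = (2 : ℝ≥0∞)⁻¹ ^ x.length)

include hμ

lemma diff_val {p : List Bool × List Bool} (hp : p ∈ K) :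
    μ (cylinder p.1 \ cylinder p.2) =
      (1 - (2 : ℝ≥0∞)⁻¹ ^ (n + 1)) * μ (cylinder p.1) := by
  have hsub : cylinder p.2 ⊆ cylinder p.1 := cylinder_mono (hK.1 p hp).1
  rw [measure_diff hsub (measurableSet_cylinder _).nullMeasurableSet
      (by rw [hμ]; exact (ENNReal.pow_ne_top (by simp))),
    hμ, hμ, target_len hK hlen hp,
    ENNReal.sub_mul (fun _ _ => ENNReal.pow_ne_top (by simp)), one_mul]
  congr 1
  rw [show p.1.length + n + 1 = p.1.length + (n + 1) by omega, pow_add, mul_comm]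

lemma evt_bound : ∀ (k : ℕ) (w : List Bool),
    μ (Evt K k w) ≤ (1 - (2 : ℝ≥0∞)⁻¹ ^ (n + 1)) ^ k * (2 : ℝ≥0∞)⁻¹ ^ w.length := by
  intro k
  induction k with
  | zero =>
    intro w
    have : Evt K 0 w ⊆ cylinder w := fun π hπ => hπ.1
    calc μ (Evt K 0 w) ≤ μ (cylinder w) := measure_mono this
      _ = _ := by rw [hμ, pow_zero, one_mul]
  | succ k ih =>
    intro w
    set c : ℝ≥0∞ := (2 : ℝ≥0∞)⁻¹ ^ (n + 1) with hc
    set A : Set (List Bool × List Bool) :=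
      {p | p ∈ K ∧ w <+: p.1 ∧ ∀ q ∈ K, w <+: q.1 → q.1 <+: p.1 → q.1 = p.1} with hA
    have hAmem : ∀ p ∈ A, p ∈ K := fun p hp => hp.1
    -- cylinders over A are pairwise disjoint
    have hcyl_disj : A.PairwiseDisjoint (fun p => cylinder p.1) := by
      intro p hp q hq hne
      apply cylinder_disj
      · intro h
        exact hne (src_inj hK hp.1 hq.1 (hq.2.2 p hp.1 hp.2.1 h))
      · intro h
        exact hne (src_inj hK hp.1 hq.1 (hp.2.2 q hq.1 hq.2.1 h).symm)
    -- the covering by first sources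
    have cover : Evt K (k+1) w ⊆ ⋃ p ∈ A, (Evt K (k+1) w ∩ cylinder p.1) := by
      intro π hπ
      obtain ⟨hw, ⟨S, hScard, hS⟩, hmiss⟩ := hπ
      obtain ⟨p0, hp0⟩ := Finset.card_pos.mp (by omega : 0 < S.card)
      have hsne : ({q | q ∈ K ∧ w <+: q.1 ∧ π ∈ cylinder q.1} :
          Set (List Bool × List Bool)).Nonempty :=
        ⟨p0, (hS p0 hp0).1, (hS p0 hp0).2.1, (hS p0 hp0).2.2⟩
      obtain ⟨p, hps, hpmin⟩ := exists_min_length_mem hsne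
      have hpA : p ∈ A := by
        refine ⟨hps.1, hps.2.1, ?_⟩
        intro q hqK hwq hqp
        have hπq : π ∈ cylinder q.1 := cylinder_mono hqp hps.2.2
        exact hqp.eq_of_length_le (hpmin q ⟨hqK, hwq, hπq⟩)
      exact Set.mem_biUnion hpA ⟨⟨hw, ⟨S, hScard, hS⟩, hmiss⟩, hps.2.2⟩
    -- per-piece bound
    have piece : ∀ p ∈ A,
        μ (Evt K (k+1) w ∩ cylinder p.1) ≤ (1 - c) ^ (k+1) * μ (cylinder p.1) := by
      intro p hp
      have hdiff := diff_val hK hlen μ hμ hp.1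
      cases k with
      | zero =>
        have hsub : Evt K 1 w ∩ cylinder p.1 ⊆ cylinder p.1 \ cylinder p.2 := by
          rintro π ⟨⟨hw, _, hmiss⟩, hπp⟩
          exact ⟨hπp, hmiss p hp.1 hp.2.1 hπp⟩
        calc μ (Evt K 1 w ∩ cylinder p.1) ≤ μ (cylinder p.1 \ cylinder p.2) :=
              measure_mono hsub
          _ = (1 - c) ^ 1 * μ (cylinder p.1) := by rw [pow_one]; exact hdiff
      | succ m =>
        set B : Set (List Bool × List Bool) :=
          {q | q ∈ K ∧ (p.1 <+: q.1 ∧ p.1 ≠ q.1) ∧ ¬ (p.2 <+: q.1) ∧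
            ∀ q' ∈ K, (p.1 <+: q'.1 ∧ p.1 ≠ q'.1) → q'.1 <+: q.1 → q'.1 = q.1} with hB
        have hBsub : ∀ q ∈ B, cylinder q.1 ⊆ cylinder p.1 \ cylinder p.2 := by
          intro q hq π hπ
          refine ⟨cylinder_mono hq.2.1.1 hπ, fun hπ2 => ?_⟩
          have h1 : ¬ q.1 <+: p.2 := by
            intro h
            exact hq.2.1.2 (congrArg Prod.fst
              (eq_of_src_between hK hp.1 hq.1 hq.2.1.1 h))
          exact Set.disjoint_left.mp (cylinder_disj h1 hq.2.2.1) hπ hπ2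
        have hBdisj : B.PairwiseDisjoint (fun q => cylinder q.1) := by
          intro q hq r hr hne
          apply cylinder_disj
          · intro h
            exact hne (src_inj hK hq.1 hr.1 (hr.2.2.2 q hq.1 hq.2.1 h))
          · intro h
            exact hne (src_inj hK hq.1 hr.1 (hq.2.2.2 r hr.1 hr.2.1 h).symm)
        have cover2 : Evt K (m+2) w ∩ cylinder p.1 ⊆ ⋃ q ∈ B, Evt K (m+1) q.1 := by
          rintro π ⟨⟨hw, ⟨S, hScard, hS⟩, hmiss⟩, hπp⟩
          have hpmiss : π ∉ cylinder p.2 := hmiss p hp.1 hp.2.1 hπp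
          have hSbeyond : ∀ q ∈ S, q ≠ p → (p.1 <+: q.1 ∧ p.1 ≠ q.1) := by
            intro q hq hne
            have hq' := hS q hq
            rcases le_total q.1.length p.1.length with h | h
            · have h2 : q.1 <+: p.1 := prefix_of_mem_cylinder hq'.2.2 hπp h
              have h3 : q.1 = p.1 := hp.2.2 q hq'.1 hq'.2.1 h2
              exact absurd (src_inj hK hq'.1 hp.1 h3) hne
            · have hpq : p.1 <+: q.1 := prefix_of_mem_cylinder hπp hq'.2.2 h
              exact ⟨hpq, fun he => hne (src_inj hK hq'.1 hp.1 he.symm)⟩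
          have hcard : m + 1 ≤ (S.erase p).card := by
            have := Finset.pred_card_le_card_erase (s := S) (a := p)
            omega
          obtain ⟨q1, hq1⟩ := Finset.card_pos.mp (by omega : 0 < (S.erase p).card)
          have hq1' := Finset.mem_erase.mp hq1
          have hs'ne : ({q | q ∈ K ∧ (p.1 <+: q.1 ∧ p.1 ≠ q.1) ∧ π ∈ cylinder q.1} :
              Set (List Bool × List Bool)).Nonempty :=
            ⟨q1, (hS q1 hq1'.2).1, hSbeyond q1 hq1'.2 hq1'.1, (hS q1 hq1'.2).2.2⟩
          obtain ⟨qs, hqs, hqsmin⟩ := exists_min_length_mem hs'ne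
          have hπqs : π ∈ cylinder qs.1 := hqs.2.2
          have hqsB : qs ∈ B := by
            refine ⟨hqs.1, hqs.2.1, fun h => hpmiss (cylinder_mono h hπqs), ?_⟩
            intro q' hq'K hq'prop hq'qs
            have hπq' : π ∈ cylinder q'.1 := cylinder_mono hq'qs hπqs
            exact hq'qs.eq_of_length_le (hqsmin q' ⟨hq'K, hq'prop, hπq'⟩)
          refine Set.mem_biUnion hqsB ?_
          obtain ⟨T, hTsub, hTcard⟩ := Finset.exists_subset_card_eq hcard
          refine ⟨hπqs, ⟨T, hTcard, ?_⟩, ?_⟩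
          · intro q hqT
            have hqe := Finset.mem_erase.mp (hTsub hqT)
            have hq' := hS q hqe.2
            have hbey := hSbeyond q hqe.2 hqe.1
            have hlenle : qs.1.length ≤ q.1.length :=
              hqsmin q ⟨hq'.1, hbey, hq'.2.2⟩
            exact ⟨hq'.1, prefix_of_mem_cylinder hπqs hq'.2.2 hlenle, hq'.2.2⟩
          · intro q hqK hqsq hπq
            exact hmiss q hqK (hp.2.1.trans (hqs.2.1.1.trans hqsq)) hπq
        calc μ (Evt K (m+2) w ∩ cylinder p.1)
            ≤ μ (⋃ q ∈ B, Evt K (m+1) q.1) := measure_mono cover2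
          _ ≤ ∑' q : B, μ (Evt K (m+1) (q : List Bool × List Bool).1) :=
              measure_biUnion_le μ (Set.to_countable B) _
          _ ≤ ∑' q : B, (1 - c) ^ (m+1) * μ (cylinder (q : List Bool × List Bool).1) := by
              refine ENNReal.tsum_le_tsum fun q => ?_
              rw [hμ]
              exact ih (q : List Bool × List Bool).1
          _ = (1 - c) ^ (m+1) * ∑' q : B, μ (cylinder (q : List Bool × List Bool).1) :=
              ENNReal.tsum_mul_left
          _ ≤ (1 - c) ^ (m+1) * μ (cylinder p.1 \ cylinder p.2) := by
              gcongr
              rw [← measure_biUnion (Set.to_countable B) hBdisj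
                (fun q _ => measurableSet_cylinder _)]
              exact measure_mono (Set.iUnion₂_subset hBsub)
          _ = (1 - c) ^ (m+2) * μ (cylinder p.1) := by
              rw [hdiff, ← mul_assoc, ← pow_succ]
    -- assemble
    calc μ (Evt K (k+1) w)
        ≤ μ (⋃ p ∈ A, Evt K (k+1) w ∩ cylinder p.1) := measure_mono cover
      _ ≤ ∑' p : A, μ (Evt K (k+1) w ∩ cylinder (p : List Bool × List Bool).1) :=
          measure_biUnion_le μ (Set.to_countable A) _
      _ ≤ ∑' p : A, (1 - c) ^ (k+1) * μ (cylinder (p : List Bool × List Bool).1) :=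
          ENNReal.tsum_le_tsum fun p => piece p p.2
      _ = (1 - c) ^ (k+1) * ∑' p : A, μ (cylinder (p : List Bool × List Bool).1) :=
          ENNReal.tsum_mul_left
      _ ≤ (1 - c) ^ (k+1) * μ (cylinder w) := by
          gcongr
          rw [← measure_biUnion (Set.to_countable A) hcyl_disj
            (fun p _ => measurableSet_cylinder _)]
          exact measure_mono (Set.iUnion₂_subset fun p hp => cylinder_mono hp.2.1)
      _ = _ := by rw [hμ]

end Family

/-- If all intervals of a family have the same length `n`, then almost surely a branch
visiting the sources infinitely often also visits the targets infinitely often. -/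
theorem const_length_sources_io_imp_targets_io (μ : Measure (ℕ → Bool))
    [IsProbabilityMeasure μ]
    (hμ : ∀ x : List Bool, μ (cylinder x) = (2 : ℝ≥0∞)⁻¹ ^ x.length)
    (K : Set (List Bool × List Bool)) (hK : IsIntervalFamily K) (n : ℕ)
    (hlen : ∀ p ∈ K, intervalLen p = n) :
    μ {π | visitsIO (Prod.fst '' K) π → visitsIO (Prod.snd '' K) π} = 1 := by
  classical
  set c : ℝ≥0∞ := (2 : ℝ≥0∞)⁻¹ ^ (n + 1) with hc
  set S : Set (ℕ → Bool) :=
    {π | visitsIO (Prod.fst '' K) π → visitsIO (Prod.snd '' K) π} with hS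
  set Bad : Set (ℕ → Bool) :=
    {π | visitsIO (Prod.fst '' K) π ∧ ¬ visitsIO (Prod.snd '' K) π} with hBad
  have hFzero : ∀ w : List Bool, μ (⋂ k, Evt K k w) = 0 := by
    intro w
    have hb : ∀ k, μ (⋂ k, Evt K k w) ≤ (1 - c) ^ k * (2 : ℝ≥0∞)⁻¹ ^ w.length :=
      fun k => (measure_mono (Set.iInter_subset _ k)).trans (evt_bound hK hlen μ hμ k w)
    have hc1 : (1 : ℝ≥0∞) - c < 1 := by
      exact ENNReal.sub_lt_self ENNReal.one_ne_top one_ne_zero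
        (pow_ne_zero _ (ENNReal.inv_ne_zero.mpr ENNReal.ofNat_ne_top))
    have htends : Filter.Tendsto (fun k => (1 - c) ^ k * (2 : ℝ≥0∞)⁻¹ ^ w.length)
        Filter.atTop (nhds 0) := by
      have h0 := ENNReal.tendsto_pow_atTop_nhds_zero_of_lt_one hc1
      have h1 := ENNReal.Tendsto.mul_const h0
        (Or.inr (ENNReal.pow_ne_top (by simp) : (2 : ℝ≥0∞)⁻¹ ^ w.length ≠ ⊤))
      simpa using h1
    have hle : μ (⋂ k, Evt K k w) ≤ 0 := ge_of_tendsto' htends hb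
    exact le_antisymm hle zero_le
  have hBadsub : Bad ⊆ ⋃ w : List Bool, ⋂ k, Evt K k w := by
    intro π hπ
    obtain ⟨hio, hfin⟩ := hπ
    have hT : {z ∈ Prod.snd '' K | π ∈ cylinder z}.Finite := Set.not_infinite.mp hfin
    obtain ⟨m0, hm0⟩ := (hT.image List.length).bddAbove
    set m : ℕ := m0 + 1 with hm
    set w : List Bool := List.ofFn (fun i : Fin m => π i) with hw
    have hπw : π ∈ cylinder w := mem_cylinder_ofFn π m
    have hwlen : w.length = m := by simp [hw, hm]
    have hPinf : {p | p ∈ K ∧ π ∈ cylinder p.1}.Infinite := by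
      by_contra h
      rw [Set.not_infinite] at h
      have hsub : {z ∈ Prod.fst '' K | π ∈ cylinder z} ⊆
          Prod.fst '' {p | p ∈ K ∧ π ∈ cylinder p.1} := by
        rintro z ⟨⟨p, hpK, rfl⟩, hπz⟩
        exact ⟨p, ⟨hpK, hπz⟩, rfl⟩
      exact hio ((h.image Prod.fst).subset hsub)
    have hshortfin : {p | p ∈ K ∧ π ∈ cylinder p.1 ∧ p.1.length < m}.Finite := by
      apply Set.Finite.of_finite_image (f := Prod.fst)
      · apply Set.Finite.subset (List.finite_toSet w.inits)
        rintro z ⟨p, ⟨hpK, hπp, hplen⟩, rfl⟩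
        simp only [Set.mem_setOf_eq, List.mem_inits]
        exact prefix_of_mem_cylinder hπp hπw (by omega)
      · intro p hp q hq h
        exact src_inj hK hp.1 hq.1 h
    have hinf : {p | p ∈ K ∧ w <+: p.1 ∧ π ∈ cylinder p.1}.Infinite := by
      apply (hPinf.diff hshortfin).mono
      rintro p ⟨⟨hpK, hπp⟩, hnot⟩
      have hlen' : m ≤ p.1.length := by
        by_contra hlt
        exact hnot ⟨hpK, hπp, by omega⟩
      exact ⟨hpK, prefix_of_mem_cylinder hπw hπp (by omega), hπp⟩
    refine Set.mem_iUnion.mpr ⟨w, Set.mem_iInter.mpr fun k => ?_⟩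
    refine ⟨hπw, ?_, ?_⟩
    · obtain ⟨Sf, hsub, hcard⟩ := hinf.exists_subset_card_eq k
      exact ⟨Sf, hcard, fun p hp => hsub hp⟩
    · intro p hpK hwp hπp hπp2
      have h1 : p.2 ∈ {z ∈ Prod.snd '' K | π ∈ cylinder z} := ⟨⟨p, hpK, rfl⟩, hπp2⟩
      have h2 : p.2.length ≤ m0 := hm0 ⟨p.2, h1, rfl⟩
      have h3 : m ≤ p.1.length := by
        have := hwp.length_le
        omega
      have h4 := target_len hK hlen hpK
      omega
  have hBad0 : μ Bad = 0 := by
    have h1 : μ Bad ≤ ∑' w : List Bool, μ (⋂ k, Evt K k w) :=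
      (measure_mono hBadsub).trans (measure_iUnion_le _)
    simp only [hFzero, tsum_zero] at h1
    exact le_antisymm h1 zero_le
  have hcompl : Sᶜ = Bad := by
    ext π
    simp only [hS, hBad, Set.mem_compl_iff, Set.mem_setOf_eq, Classical.not_imp]
  have hle : μ S ≤ 1 := prob_le_one
  have hge : (1 : ℝ≥0∞) ≤ μ S := by
    have h0 : (1 : ℝ≥0∞) = μ Set.univ := measure_univ.symm
    rw [h0, ← Set.union_compl_self S]
    calc μ (S ∪ Sᶜ) ≤ μ S + μ Sᶜ := measure_union_le _ _
      _ = μ S := by rw [hcompl, hBad0, add_zero]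
  exact le_antisymm hle hge
end

section
/- For every d ≥ 1 there exists a vector sequence of dimension d that is not an asymptotic mix of any vector sequence of dimension d−1 (nor of any smaller dimension). -/
/-- `f` restricted to positions in `X` is bounded. -/
def BddOn (f : ℕ → ℕ) (X : Set ℕ) : Prop :=
  ∃ b, ∀ n ∈ X, f n ≤ b

/-- Asymptotic equivalence of number sequences. -/
def AsymEquiv (f g : ℕ → ℕ) : Prop :=
  ∀ X : Set ℕ, BddOn f X ↔ BddOn g X

/-- A vector sequence: every vector is nonempty. -/
def IsVectorSeq (F : ℕ → List ℕ) : Prop :=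
  ∀ n, F n ≠ []

/-- `f` is an extraction of the vector sequence `F`. -/
def Extraction (f : ℕ → ℕ) (F : ℕ → List ℕ) : Prop :=
  ∀ n, f n ∈ F n

/-- `F` is an asymptotic mix of `G`. -/
def IsMix (F G : ℕ → List ℕ) : Prop :=
  ∀ f, Extraction f F → ∃ g, Extraction g G ∧ AsymEquiv f g

/-- The extraction picking the minimal component of each vector. -/
def minSeq (F : ℕ → List ℕ) (n : ℕ) : ℕ := ((F n).min?).getD 0

/-- The extraction picking the maximal component of each vector. -/
def maxSeq (F : ℕ → List ℕ) (n : ℕ) : ℕ := ((F n).max?).getD 0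

/-- Transfer lemma: if `a ∼ b` and `a' ∼ b'`, then on positions where `b = b'`,
boundedness of `a` by `B` forces a uniform bound on `a'`. -/
lemma asym_transfer {a b a' b' : ℕ → ℕ} (hab : AsymEquiv a b) (hab' : AsymEquiv a' b')
    (B : ℕ) : ∃ B', ∀ n, b n = b' n → a n ≤ B → a' n ≤ B' := by
  set X : Set ℕ := {n | b n = b' n ∧ a n ≤ B} with hX
  have h1 : BddOn a X := ⟨B, fun n hn => hn.2⟩
  have h2 : BddOn b X := (hab X).1 h1
  obtain ⟨c, hc⟩ := h2
  have h3 : BddOn b' X := ⟨c, fun n hn => hn.1 ▸ hc n hn⟩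
  obtain ⟨B', hB'⟩ := (hab' X).2 h3
  exact ⟨B', fun n h₁ h₂ => hB' n ⟨h₁, h₂⟩⟩

theorem exists_vector_seq_not_mix_of_lower_dim (d : ℕ) (hd : 1 ≤ d) :
    ∃ F : ℕ → List ℕ, (∀ n, (F n).length = d) ∧
      ∀ (G : ℕ → List ℕ) (e : ℕ), 1 ≤ e → e < d →
        (∀ n, (G n).length = e) → ¬ IsMix F G := by
  haveI : Nonempty (Fin d) := ⟨⟨0, hd⟩⟩
  obtain ⟨σ, hσ⟩ := exists_surjective_nat (Fin d → ℕ)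
  refine ⟨fun n => List.ofFn (σ n), fun n => List.length_ofFn, ?_⟩
  intro G e he hed hGlen hmix
  -- the d coordinate extractions
  have hext : ∀ i : Fin d, Extraction (fun n => σ n i) (fun n => List.ofFn (σ n)) :=
    fun i n => List.mem_ofFn.mpr ⟨i, rfl⟩
  choose g hgext hgeq using fun i : Fin d => hmix _ (hext i)
  -- the transfer bounds
  have hΦex : ∀ (i i' : Fin d) (B : ℕ), ∃ B', ∀ n, g i n = g i' n → σ n i ≤ B → σ n i' ≤ B' :=
    fun i i' B => asym_transfer (hgeq i) (hgeq i') B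
  choose Φ hΦ using hΦex
  set Ψ : ℕ → ℕ := fun B => (Finset.univ ×ˢ Finset.univ ×ˢ Finset.range (B + 1)).sup
      (fun x : Fin d × Fin d × ℕ => Φ x.1 x.2.1 x.2.2) with hΨ
  have hΨmono : Monotone Ψ := by
    intro B B' hBB'
    apply Finset.sup_mono
    intro x hx
    simp only [Finset.mem_product, Finset.mem_range] at hx ⊢
    exact ⟨hx.1, hx.2.1, lt_of_lt_of_le hx.2.2 (by omega)⟩
  have hΨge : ∀ (i i' : Fin d) (B : ℕ), Φ i i' B ≤ Ψ B := by
    intro i i' B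
    exact Finset.le_sup (f := fun x : Fin d × Fin d × ℕ => Φ x.1 x.2.1 x.2.2)
      (b := (i, i', B)) (by simp [Finset.mem_product])
  set step : ℕ → ℕ := fun B => max B (Ψ B) + 1 with hstep
  set p : ℕ → ℕ := fun k => step^[k] 0 with hp
  have hpsucc : ∀ k, p (k + 1) = step (p k) := fun k => Function.iterate_succ_apply' step k 0
  have hpstrict : StrictMono p := by
    apply strictMono_nat_of_lt_succ
    intro k
    rw [hpsucc k]
    calc p k ≤ max (p k) (Ψ (p k)) := le_max_left _ _
    _ < max (p k) (Ψ (p k)) + 1 := Nat.lt_succ_self _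
  -- key inequality: for i < i', p i' > Φ i i' (p i)
  have hkey : ∀ (i i' : Fin d), (i : ℕ) < (i' : ℕ) → Φ i i' (p i) < p i' := by
    intro i i' hii'
    obtain ⟨k, hk⟩ : ∃ k, (i' : ℕ) = k + 1 := ⟨(i' : ℕ) - 1, by omega⟩
    have hik : (i : ℕ) ≤ k := by omega
    calc Φ i i' (p i) ≤ Ψ (p i) := hΨge i i' _
    _ ≤ Ψ (p k) := hΨmono (hpstrict.monotone hik)
    _ ≤ max (p k) (Ψ (p k)) := le_max_right _ _
    _ < step (p k) := Nat.lt_succ_self _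
    _ = p (k + 1) := (hpsucc k).symm
    _ = p i' := by rw [hk]
  -- the special point
  obtain ⟨n₀, hn₀⟩ := hσ (fun j : Fin d => p j)
  have hσn₀ : ∀ i : Fin d, σ n₀ i = p i := fun i => congrFun hn₀ i
  -- pigeonhole
  have hmem : ∀ i : Fin d, g i n₀ ∈ G n₀ := fun i => hgext i n₀
  have hJlt : ∀ i : Fin d, (G n₀).idxOf (g i n₀) < e := by
    intro i
    rw [← hGlen n₀]
    exact List.idxOf_lt_length_iff.mpr (hmem i)
  obtain ⟨i, i', hne, heq⟩ := Fintype.exists_ne_map_eq_of_card_lt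
    (fun i : Fin d => (⟨(G n₀).idxOf (g i n₀), hJlt i⟩ : Fin e)) (by simpa using hed)
  have hgeqn : g i n₀ = g i' n₀ := by
    have h1 := List.getElem_idxOf ((hGlen n₀) ▸ hJlt i)
    have h2 := List.getElem_idxOf ((hGlen n₀) ▸ hJlt i')
    have : (G n₀).idxOf (g i n₀) = (G n₀).idxOf (g i' n₀) := congrArg Fin.val heq
    simp only [this] at h1
    exact h1.symm.trans h2
  -- wlog i < i'
  rcases lt_or_gt_of_ne (fun h : (i : ℕ) = (i' : ℕ) => hne (Fin.ext h)) with hlt | hgt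
  · have := hΦ i i' (p i) n₀ hgeqn (le_of_eq (hσn₀ i))
    rw [hσn₀ i'] at this
    exact absurd this (not_le.mpr (hkey i i' hlt))
  · have := hΦ i' i (p i') n₀ hgeqn.symm (le_of_eq (hσn₀ i'))
    rw [hσn₀ i] at this
    exact absurd this (not_le.mpr (hkey i' i hgt))
end

section
/- Let X, Y ⊆ 2* be sets of nodes such that the set of branches visiting both X and Y infinitely often has positive coin-tossing measure. Then there exist X' ⊆ X and Y' ⊆ Y such that between any two comparable nodes x < y of Y' there is a node u with x < u < y and u ∈ X', and moreover the set of branches visiting both X' and Y' infinitely often has positive measure. -/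
open MeasureTheory ENNReal

lemma strict_pfx_len {y' y : List Bool} (h : y' <+: y) (hne : y' ≠ y) :
    y'.length < y.length :=
  lt_of_le_of_ne h.length_le (fun hl => hne (h.eq_of_length hl))

/-- `y ∈ goodY X Y` iff `y ∈ Y` and between every strict good prefix of `y` and `y`
there is a node of `X`. -/
def goodY (X Y : Set (List Bool)) : List Bool → Prop := fun y =>
  y ∈ Y ∧ ∀ y', y' <+: y → y' ≠ y → goodY X Y y' →
    ∃ u ∈ X, (y' <+: u ∧ y' ≠ u) ∧ (u <+: y ∧ u ≠ y)
termination_by y => y.length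
decreasing_by
  exact strict_pfx_len ‹_› ‹_›

lemma goodY_iff (X Y : Set (List Bool)) (y : List Bool) :
    goodY X Y y ↔ y ∈ Y ∧ ∀ y', y' <+: y → y' ≠ y → goodY X Y y' →
    ∃ u ∈ X, (y' <+: u ∧ y' ≠ u) ∧ (u <+: y ∧ u ≠ y) := by
  rw [goodY]

lemma cyl_mono {π : ℕ → Bool} {z w : List Bool} (h : z <+: w) (hw : π ∈ cylinder w) :
    π ∈ cylinder z := by
  intro i
  have hi : (i : ℕ) < w.length := lt_of_lt_of_le i.2 h.length_le
  have := hw ⟨i, hi⟩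
  simpa [List.get_eq_getElem, h.getElem i.2] using this

lemma cyl_prefix {π : ℕ → Bool} {z w : List Bool} (hz : π ∈ cylinder z)
    (hw : π ∈ cylinder w) (h : z.length ≤ w.length) : z <+: w := by
  refine ⟨w.drop z.length, ?_⟩
  apply List.ext_getElem (by simp [Nat.add_sub_cancel' h])
  intro i h1 h2
  by_cases hi : i < z.length
  · have := hz ⟨i, hi⟩
    have := hw ⟨i, lt_of_lt_of_le hi h⟩
    simp_all [List.getElem_append, hi]
  · simp only [List.getElem_append, hi, if_neg, dite_false]
    rw [List.getElem_drop]
    congr 1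
    omega

lemma unbounded_of_infinite {π : ℕ → Bool} {S : Set (List Bool)}
    (h : {z ∈ S | π ∈ cylinder z}.Infinite) (N : ℕ) :
    ∃ z ∈ S, π ∈ cylinder z ∧ N < z.length := by
  have hinj : Set.InjOn List.length {z ∈ S | π ∈ cylinder z} := by
    intro a ha b hb hab
    exact (cyl_prefix ha.2 hb.2 (le_of_eq hab)).eq_of_length hab
  obtain ⟨m, hm, hNm⟩ := (h.image hinj).exists_gt N
  obtain ⟨z, hz, rfl⟩ := hm
  exact ⟨z, hz.1, hz.2, hNm⟩

theorem alternating_subsets (μ : Measure (ℕ → Bool)) [IsProbabilityMeasure μ]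
    (hμ : ∀ x : List Bool, μ (cylinder x) = (2 : ℝ≥0∞)⁻¹ ^ x.length)
    (X Y : Set (List Bool))
    (h : 0 < μ {π | visitsIO X π ∧ visitsIO Y π}) :
    ∃ X' ⊆ X, ∃ Y' ⊆ Y,
      (∀ x ∈ Y', ∀ y ∈ Y', x <+: y → x ≠ y →
        ∃ u ∈ X', (x <+: u ∧ x ≠ u) ∧ (u <+: y ∧ u ≠ y)) ∧
      0 < μ {π | visitsIO X' π ∧ visitsIO Y' π} := by
  refine ⟨X, le_refl X, {y | goodY X Y y}, ?_, ?_, ?_⟩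
  · intro y hy; exact ((goodY_iff X Y y).mp hy).1
  · intro x hx y hy hpfx hne
    exact ((goodY_iff X Y y).mp hy).2 x hpfx hne hx
  · refine lt_of_lt_of_le h (measure_mono ?_)
    rintro π ⟨hX, hY⟩
    refine ⟨hX, ?_⟩
    rw [visitsIO]
    by_contra hfin
    rw [Set.not_infinite] at hfin
    obtain ⟨N, hN⟩ := (hfin.image List.length).bddAbove
    obtain ⟨x, hxX, hxc, hxN⟩ := unbounded_of_infinite hX N
    obtain ⟨y, hyY, hyc, hyx⟩ := unbounded_of_infinite hY x.length
    have hgood : goodY X Y y := by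
      rw [goodY_iff]
      refine ⟨hyY, ?_⟩
      intro y' hp hne hg
      have hy'c : π ∈ cylinder y' := cyl_mono hp hyc
      have hy'N : y'.length ≤ N := hN (Set.mem_image_of_mem List.length ⟨hg, hy'c⟩)
      have h1 : y' <+: x := cyl_prefix hy'c hxc (le_of_lt (lt_of_le_of_lt hy'N hxN))
      have h2 : x <+: y := cyl_prefix hxc hyc (le_of_lt hyx)
      refine ⟨x, hxX, ⟨h1, ?_⟩, h2, ?_⟩
      · intro e; subst e; omega
      · intro e; subst e; omega
    have : y.length ≤ N := hN (Set.mem_image_of_mem List.length ⟨hgood, hyc⟩)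
    omega
end
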